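/- Let e ∈ 𝔽(r₁,r₂), let τ ∈ 𝓘, and let U be the syndrome table afforded by τ and e. Fix a monomial order ≤_T on ℕ×ℕ, and let Λ(U)‾ be the image of Λ(U) under the canonical projection L[X₁,X₂] → L(r₁,r₂). Then D_α(Λ(U)‾) = supp(e). -/

import Mathlib

/-- A monomial order on ℕ × ℕ: a linear order compatible with addition
for which (0,0) is the least element. -/
structure MonOrd where
  le : ℕ × ℕ → ℕ × ℕ → Prop
  refl : ∀ a, le a a
  trans : ∀ a b c, le a b → le b c → le a c
  antisymm : ∀ a b, le a b → le b a → a = b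
  total : ∀ a b, le a b ∨ le b a
  add_right : ∀ a b c, le a b → le (a + c) (b + c)
  zero_le : ∀ a, le (0, 0) a

/-- Strict version of a monomial order. -/
def MonOrd.lt (T : MonOrd) (a b : ℕ × ℕ) : Prop := T.le a b ∧ a ≠ b

/-- `s` is the leading power product exponent of `f` w.r.t. `T`. -/
def IsLP {L : Type} [Field L] (T : MonOrd) (f : (ℕ × ℕ) →₀ L) (s : ℕ × ℕ) : Prop :=
  s ∈ f.support ∧ ∀ m ∈ f.support, T.le m s

/-- `f[U]_n`, computed with respect to a given leading exponent `s` of `f`. -/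
noncomputable def fApp {L : Type} [Field L] (U : ℕ × ℕ → L) (f : (ℕ × ℕ) →₀ L)
    (s n : ℕ × ℕ) : L :=
  if s.1 ≤ n.1 ∧ s.2 ≤ n.2 then
    ∑ m ∈ f.support, f m * U (m.1 + n.1 - s.1, m.2 + n.2 - s.2)
  else 0

/-- `f` generates the doubly periodic array `U`. -/
def GeneratesU {L : Type} [Field L] (T : MonOrd) (U : ℕ × ℕ → L) (f : (ℕ × ℕ) →₀ L) : Prop :=
  ∃ s, IsLP T f s ∧ ∀ n, fApp U f s n = 0

/-- `f` generates the finite subarray `u^l` of `U`. -/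
def GeneratesUpTo {L : Type} [Field L] (T : MonOrd) (U : ℕ × ℕ → L) (l : ℕ × ℕ)
    (f : (ℕ × ℕ) →₀ L) : Prop :=
  ∃ s, IsLP T f s ∧ ∀ k, s.1 ≤ k.1 → s.2 ≤ k.2 → T.lt k l → fApp U f s k = 0

/-- `U` is a doubly periodic array of period r₁ × r₂. -/
def DoublyPeriodic {L : Type} (r₁ r₂ : ℕ) (U : ℕ × ℕ → L) : Prop :=
  ∀ n m : ℕ × ℕ, n.1 % r₁ = m.1 % r₁ → n.2 % r₂ = m.2 % r₂ → U n = U m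

/-- Evaluation of a bivariate polynomial at a point `(x, y)`. -/
noncomputable def polyEval {L : Type} [Field L] (f : (ℕ × ℕ) →₀ L) (x y : L) : L :=
  ∑ m ∈ f.support, f m * x ^ m.1 * y ^ m.2

/-- The syndrome table afforded by `τ` and `e`:  `u_n = e(α^(τ+n))`. -/
noncomputable def synTable {F L : Type} [Field F] [Field L] [Algebra F L] {r₁ r₂ : ℕ}
    (α₁ α₂ : L) (τ : Fin r₁ × Fin r₂) (e : Fin r₁ × Fin r₂ → F) : ℕ × ℕ → L :=
  fun n => ∑ p : Fin r₁ × Fin r₂,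
    algebraMap F L (e p) * (α₁ ^ ((τ.1 : ℕ) + n.1)) ^ (p.1 : ℕ)
      * (α₂ ^ ((τ.2 : ℕ) + n.2)) ^ (p.2 : ℕ)

/-- The weight ω(e): number of nonzero coefficients. -/
noncomputable def wt {F : Type} [Field F] {r₁ r₂ : ℕ} (e : Fin r₁ × Fin r₂ → F) : ℕ :=
  {p | e p ≠ 0}.ncard

/-- The hyperbolic set B(δ) of amplitude δ inside {0,…,r₁−1} × {0,…,r₂−1}. -/
def hypB (r₁ r₂ δ : ℕ) : Set (ℕ × ℕ) :=
  {l | l.1 < r₁ ∧ l.2 < r₂ ∧ (l.1 + 1) * (l.2 + 1) ≤ δ ∧ l ≠ (δ - 1, 0) ∧ l ≠ (0, δ - 1)}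

/-- The border set 𝔉 = {l ∈ B(2t+1) : 2t ≤ (l₁+1)(l₂+1)}. -/
def frontF (r₁ r₂ t : ℕ) : Set (ℕ × ℕ) :=
  {l ∈ hypB r₁ r₂ (2 * t + 1) | 2 * t ≤ (l.1 + 1) * (l.2 + 1)}

/-- The lexicographic order with X₁ > X₂. -/
def lexMonOrd : MonOrd where
  le a b := a.1 < b.1 ∨ (a.1 = b.1 ∧ a.2 ≤ b.2)
  refl a := by omega
  trans a b c h1 h2 := by omega
  antisymm a b h1 h2 := by
    obtain ⟨a1, a2⟩ := a; obtain ⟨b1, b2⟩ := b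
    simp_all only [Prod.mk.injEq]; omega
  total a b := by omega
  add_right a b c h := by
    obtain ⟨a1, a2⟩ := a; obtain ⟨b1, b2⟩ := b; obtain ⟨c1, c2⟩ := c
    simp_all only [Prod.mk_add_mk]; omega
  zero_le a := by
    obtain ⟨a1, a2⟩ := a; simp only []; omega

/-- The (reverse) graded order with X₂ > X₁. -/
def grMonOrd : MonOrd where
  le a b := a.1 + a.2 < b.1 + b.2 ∨ (a.1 + a.2 = b.1 + b.2 ∧ a.2 ≤ b.2)
  refl a := by omega
  trans a b c h1 h2 := by omega
  antisymm a b h1 h2 := by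
    obtain ⟨a1, a2⟩ := a; obtain ⟨b1, b2⟩ := b
    simp_all only [Prod.mk.injEq]; omega
  total a b := by omega
  add_right a b c h := by
    obtain ⟨a1, a2⟩ := a; obtain ⟨b1, b2⟩ := b; obtain ⟨c1, c2⟩ := c
    simp_all only [Prod.mk_add_mk]; omega
  zero_le a := by
    obtain ⟨a1, a2⟩ := a; simp only []; omega

/-- The ideal (X₁^{r₁} − 1, X₂^{r₂} − 1) of L[X₁,X₂]. -/
noncomputable def periodIdeal (L : Type) [Field L] (r₁ r₂ : ℕ) :
    Ideal (AddMonoidAlgebra L (ℕ × ℕ)) :=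
  Ideal.span {AddMonoidAlgebra.single (r₁, 0) 1 - 1, AddMonoidAlgebra.single (0, r₂) 1 - 1}

section AuxProofs

open Finset

variable {L : Type} [Field L]

/-- Evaluation of `AddMonoidAlgebra L (ℕ × ℕ)` at a point, as an algebra hom. -/
noncomputable def evalHom (L : Type) [Field L] (x y : L) :
    AddMonoidAlgebra L (ℕ × ℕ) →ₐ[L] L :=
  AddMonoidAlgebra.lift L L (ℕ × ℕ)
    { toFun := fun m => x ^ (Multiplicative.toAdd m).1 * y ^ (Multiplicative.toAdd m).2
      map_one' := by simp
      map_mul' := fun a b => by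
        simp only [toAdd_mul, Prod.fst_add, Prod.snd_add, pow_add]
        ring }

lemma evalHom_single (x y : L) (m : ℕ × ℕ) (c : L) :
    evalHom L x y (AddMonoidAlgebra.single m c) = c * (x ^ m.1 * y ^ m.2) := by
  rw [evalHom, AddMonoidAlgebra.lift_single]
  simp [smul_eq_mul]

lemma evalHom_eq_polyEval (x y : L) (f : AddMonoidAlgebra L (ℕ × ℕ)) :
    evalHom L x y f = polyEval f.coeff x y := by
  rw [evalHom, AddMonoidAlgebra.lift_apply, polyEval, Finsupp.sum]
  refine Finset.sum_congr rfl fun m _ => ?_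
  simp [smul_eq_mul, mul_assoc]

lemma evalHom_eq_zero_of_mem {r₁ r₂ : ℕ} {x y : L} (hx : x ^ r₁ = 1) (hy : y ^ r₂ = 1)
    {h : AddMonoidAlgebra L (ℕ × ℕ)} (hh : h ∈ periodIdeal L r₁ r₂) :
    evalHom L x y h = 0 := by
  have hle : periodIdeal L r₁ r₂ ≤ RingHom.ker (evalHom L x y).toRingHom := by
    rw [periodIdeal, Ideal.span_le]
    rintro g hg
    simp only [Set.mem_insert_iff, Set.mem_singleton_iff] at hg
    rcases hg with rfl | rfl <;>
      simp [RingHom.mem_ker, evalHom_single, hx, hy]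
  exact hle hh

lemma finset_exists_T_max (T : MonOrd) :
    ∀ s : Finset (ℕ × ℕ), s.Nonempty → ∃ a ∈ s, ∀ b ∈ s, T.le b a := by
  classical
  intro s
  induction s using Finset.induction_on with
  | empty => intro h; simp at h
  | @insert a s _ ih =>
    intro _
    rcases s.eq_empty_or_nonempty with rfl | hs
    · refine ⟨a, Finset.mem_insert_self a ∅, ?_⟩
      intro b hb
      rcases Finset.mem_insert.mp hb with rfl | hb
      · exact T.refl b
      · simp at hb
    · obtain ⟨m, hm, hmax⟩ := ih hs
      rcases T.total a m with hle | hle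
      · refine ⟨m, Finset.mem_insert_of_mem hm, ?_⟩
        intro b hb
        rcases Finset.mem_insert.mp hb with rfl | hb
        · exact hle
        · exact hmax b hb
      · refine ⟨a, Finset.mem_insert_self a s, ?_⟩
        intro b hb
        rcases Finset.mem_insert.mp hb with rfl | hb
        · exact T.refl b
        · exact T.trans b m a (hmax b hb) hle

lemma exists_isLP (T : MonOrd) {f : (ℕ × ℕ) →₀ L} (hf : f ≠ 0) : ∃ s, IsLP T f s := by
  obtain ⟨a, ha, hmax⟩ :=
    finset_exists_T_max T f.support (Finsupp.support_nonempty_iff.mpr hf)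
  exact ⟨a, ha, hmax⟩

lemma pow_split (α : L) (t m n s p : ℕ) (h : s ≤ n) :
    (α ^ (t + (m + n - s))) ^ p = α ^ (t * p) * (α ^ p) ^ (n - s) * (α ^ p) ^ m := by
  obtain ⟨d, rfl⟩ : ∃ d, n = s + d := ⟨n - s, by omega⟩
  rw [show s + d - s = d by omega, show t + (m + (s + d) - s) = t + (m + d) by omega,
    ← pow_mul, ← pow_mul, ← pow_mul, ← pow_add, ← pow_add]
  congr 1
  ring

lemma fApp_syn {F : Type} [Field F] [Field L] [Algebra F L] {r₁ r₂ : ℕ}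
    (α₁ α₂ : L) (τ : Fin r₁ × Fin r₂) (e : Fin r₁ × Fin r₂ → F)
    (f : (ℕ × ℕ) →₀ L) (s n : ℕ × ℕ) (h1 : s.1 ≤ n.1) (h2 : s.2 ≤ n.2) :
    fApp (synTable α₁ α₂ τ e) f s n =
      ∑ p : Fin r₁ × Fin r₂,
        (algebraMap F L (e p) * α₁ ^ ((τ.1 : ℕ) * (p.1 : ℕ)) * α₂ ^ ((τ.2 : ℕ) * (p.2 : ℕ))
            * polyEval f (α₁ ^ (p.1 : ℕ)) (α₂ ^ (p.2 : ℕ)))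
          * (α₁ ^ (p.1 : ℕ)) ^ (n.1 - s.1) * (α₂ ^ (p.2 : ℕ)) ^ (n.2 - s.2) := by
  rw [fApp, if_pos ⟨h1, h2⟩]
  simp only [synTable, polyEval, Finset.mul_sum, Finset.sum_mul]
  rw [Finset.sum_comm]
  refine Finset.sum_congr rfl fun p _ => ?_
  refine Finset.sum_congr rfl fun m _ => ?_
  rw [pow_split α₁ _ _ _ _ _ h1, pow_split α₂ _ _ _ _ _ h2]
  ring

lemma geom_orth {r : ℕ} (hr : 0 < r) {α : L} (hα : IsPrimitiveRoot α r) (i j : Fin r) :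
    ∑ k ∈ Finset.range r, (α ^ (i : ℕ) * (α ^ (j : ℕ))⁻¹) ^ k
      = if i = j then (r : L) else 0 := by
  have hα0 : α ≠ 0 := hα.ne_zero hr.ne'
  by_cases hij : i = j
  · subst hij
    rw [if_pos rfl, mul_inv_cancel₀ (pow_ne_zero _ hα0)]
    simp
  · rw [if_neg hij]
    have hz1 : α ^ (i : ℕ) * (α ^ (j : ℕ))⁻¹ ≠ 1 := by
      rw [Ne, mul_inv_eq_one₀ (pow_ne_zero _ hα0)]
      intro h
      exact hij (Fin.val_injective (hα.pow_inj i.isLt j.isLt h))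
    have hzr : (α ^ (i : ℕ) * (α ^ (j : ℕ))⁻¹) ^ r = 1 := by
      rw [mul_pow, inv_pow, ← pow_mul, ← pow_mul, mul_comm (i : ℕ) r, mul_comm (j : ℕ) r,
        pow_mul, pow_mul, hα.pow_eq_one, one_pow, one_pow, inv_one, mul_one]
    rw [geom_sum_eq hz1, hzr, sub_self, zero_div]

lemma dft_inj {r₁ r₂ : ℕ} (hr₁ : 0 < r₁) (hr₂ : 0 < r₂)
    {α₁ α₂ : L} (hα₁ : IsPrimitiveRoot α₁ r₁) (hα₂ : IsPrimitiveRoot α₂ r₂)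
    (c : Fin r₁ × Fin r₂ → L)
    (h : ∀ k₁ k₂ : ℕ, ∑ p : Fin r₁ × Fin r₂,
      c p * (α₁ ^ (p.1 : ℕ)) ^ k₁ * (α₂ ^ (p.2 : ℕ)) ^ k₂ = 0)
    (q : Fin r₁ × Fin r₂) : c q = 0 := by
  classical
  have key : ∑ p : Fin r₁ × Fin r₂, c p
      * (∑ k₁ ∈ Finset.range r₁, (α₁ ^ (p.1 : ℕ) * (α₁ ^ (q.1 : ℕ))⁻¹) ^ k₁)
      * (∑ k₂ ∈ Finset.range r₂, (α₂ ^ (p.2 : ℕ) * (α₂ ^ (q.2 : ℕ))⁻¹) ^ k₂) = 0 := by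
    calc ∑ p : Fin r₁ × Fin r₂, c p
          * (∑ k₁ ∈ Finset.range r₁, (α₁ ^ (p.1 : ℕ) * (α₁ ^ (q.1 : ℕ))⁻¹) ^ k₁)
          * (∑ k₂ ∈ Finset.range r₂, (α₂ ^ (p.2 : ℕ) * (α₂ ^ (q.2 : ℕ))⁻¹) ^ k₂)
        = ∑ p : Fin r₁ × Fin r₂, ∑ k₁ ∈ Finset.range r₁, ∑ k₂ ∈ Finset.range r₂,
            c p * (α₁ ^ (p.1 : ℕ)) ^ k₁ * (α₂ ^ (p.2 : ℕ)) ^ k₂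
              * ((α₁ ^ (q.1 : ℕ))⁻¹) ^ k₁ * ((α₂ ^ (q.2 : ℕ))⁻¹) ^ k₂ := by
          refine Finset.sum_congr rfl fun p _ => ?_
          rw [mul_assoc, Finset.sum_mul_sum, Finset.mul_sum]
          refine Finset.sum_congr rfl fun k₁ _ => ?_
          rw [Finset.mul_sum]
          refine Finset.sum_congr rfl fun k₂ _ => ?_
          rw [mul_pow, mul_pow]
          ring
      _ = ∑ k₁ ∈ Finset.range r₁, ∑ k₂ ∈ Finset.range r₂, ∑ p : Fin r₁ × Fin r₂,
            c p * (α₁ ^ (p.1 : ℕ)) ^ k₁ * (α₂ ^ (p.2 : ℕ)) ^ k₂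
              * ((α₁ ^ (q.1 : ℕ))⁻¹) ^ k₁ * ((α₂ ^ (q.2 : ℕ))⁻¹) ^ k₂ := by
          rw [Finset.sum_comm]
          exact Finset.sum_congr rfl fun k₁ _ => Finset.sum_comm
      _ = 0 := by
          refine Finset.sum_eq_zero fun k₁ _ => Finset.sum_eq_zero fun k₂ _ => ?_
          have h0 := h k₁ k₂
          calc ∑ p : Fin r₁ × Fin r₂,
                c p * (α₁ ^ (p.1 : ℕ)) ^ k₁ * (α₂ ^ (p.2 : ℕ)) ^ k₂
                  * ((α₁ ^ (q.1 : ℕ))⁻¹) ^ k₁ * ((α₂ ^ (q.2 : ℕ))⁻¹) ^ k₂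
              = (∑ p : Fin r₁ × Fin r₂,
                  c p * (α₁ ^ (p.1 : ℕ)) ^ k₁ * (α₂ ^ (p.2 : ℕ)) ^ k₂)
                  * ((α₁ ^ (q.1 : ℕ))⁻¹) ^ k₁ * ((α₂ ^ (q.2 : ℕ))⁻¹) ^ k₂ := by
                rw [Finset.sum_mul, Finset.sum_mul]
            _ = 0 := by rw [h0, zero_mul, zero_mul]
  have key2 : ∑ p : Fin r₁ × Fin r₂,
      c p * (if p.1 = q.1 then (r₁ : L) else 0) * (if p.2 = q.2 then (r₂ : L) else 0) = 0 := by
    calc ∑ p : Fin r₁ × Fin r₂,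
        c p * (if p.1 = q.1 then (r₁ : L) else 0) * (if p.2 = q.2 then (r₂ : L) else 0)
        = ∑ p : Fin r₁ × Fin r₂, c p
            * (∑ k₁ ∈ Finset.range r₁, (α₁ ^ (p.1 : ℕ) * (α₁ ^ (q.1 : ℕ))⁻¹) ^ k₁)
            * (∑ k₂ ∈ Finset.range r₂, (α₂ ^ (p.2 : ℕ) * (α₂ ^ (q.2 : ℕ))⁻¹) ^ k₂) := by
          refine Finset.sum_congr rfl fun p _ => ?_
          rw [geom_orth hr₁ hα₁, geom_orth hr₂ hα₂]
      _ = 0 := key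
  rw [Finset.sum_eq_single_of_mem q (Finset.mem_univ q)
    (fun p _ hpq => by
      rcases (by
        by_contra hc
        push_neg at hc
        exact hpq (Prod.ext hc.1 hc.2) : p.1 ≠ q.1 ∨ p.2 ≠ q.2) with h' | h'
      · rw [if_neg h', mul_zero, zero_mul]
      · rw [if_neg h', mul_zero])] at key2
  rw [if_pos rfl, if_pos rfl] at key2
  have h1 : ((r₁ : ℕ) : L) ≠ 0 := by
    have : NeZero r₁ := ⟨hr₁.ne'⟩
    exact (hα₁.neZero').out
  have h2 : ((r₂ : ℕ) : L) ≠ 0 := by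
    have : NeZero r₂ := ⟨hr₂.ne'⟩
    exact (hα₂.neZero').out
  simpa [mul_eq_zero, h1, h2] using key2

lemma generates_of_vanish {F : Type} [Field F] [Field L] [Algebra F L] {r₁ r₂ : ℕ}
    (α₁ α₂ : L) (τ : Fin r₁ × Fin r₂) (e : Fin r₁ × Fin r₂ → F) (T : MonOrd)
    {f : (ℕ × ℕ) →₀ L} (hf : f ≠ 0)
    (hv : ∀ p : Fin r₁ × Fin r₂, e p ≠ 0 →
      polyEval f (α₁ ^ (p.1 : ℕ)) (α₂ ^ (p.2 : ℕ)) = 0) :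
    GeneratesU T (synTable α₁ α₂ τ e) f := by
  obtain ⟨s, hs⟩ := exists_isLP T hf
  refine ⟨s, hs, fun n => ?_⟩
  by_cases hn : s.1 ≤ n.1 ∧ s.2 ≤ n.2
  · rw [fApp_syn α₁ α₂ τ e f s n hn.1 hn.2]
    refine Finset.sum_eq_zero fun p _ => ?_
    by_cases hep : e p = 0
    · simp [hep]
    · rw [hv p hep]
      ring
  · rw [fApp, if_neg hn]

lemma vanish_of_generates {F : Type} [Field F] [Field L] [Algebra F L] {r₁ r₂ : ℕ}
    (hr₁ : 0 < r₁) (hr₂ : 0 < r₂)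
    {α₁ α₂ : L} (hα₁ : IsPrimitiveRoot α₁ r₁) (hα₂ : IsPrimitiveRoot α₂ r₂)
    (τ : Fin r₁ × Fin r₂) (e : Fin r₁ × Fin r₂ → F) (T : MonOrd)
    {f : (ℕ × ℕ) →₀ L} (hgen : GeneratesU T (synTable α₁ α₂ τ e) f)
    (p : Fin r₁ × Fin r₂) (hep : e p ≠ 0) :
    polyEval f (α₁ ^ (p.1 : ℕ)) (α₂ ^ (p.2 : ℕ)) = 0 := by
  obtain ⟨s, _, hz⟩ := hgen
  have h : ∀ k₁ k₂ : ℕ, ∑ p' : Fin r₁ × Fin r₂,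
      (algebraMap F L (e p') * α₁ ^ ((τ.1 : ℕ) * (p'.1 : ℕ)) * α₂ ^ ((τ.2 : ℕ) * (p'.2 : ℕ))
          * polyEval f (α₁ ^ (p'.1 : ℕ)) (α₂ ^ (p'.2 : ℕ)))
        * (α₁ ^ (p'.1 : ℕ)) ^ k₁ * (α₂ ^ (p'.2 : ℕ)) ^ k₂ = 0 := by
    intro k₁ k₂
    have h0 := hz (s.1 + k₁, s.2 + k₂)
    rw [fApp_syn α₁ α₂ τ e f s (s.1 + k₁, s.2 + k₂) (Nat.le_add_right _ _)
      (Nat.le_add_right _ _)] at h0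
    simpa [Nat.add_sub_cancel_left] using h0
  have hc := dft_inj hr₁ hr₂ hα₁ hα₂
    (fun p' => algebraMap F L (e p') * α₁ ^ ((τ.1 : ℕ) * (p'.1 : ℕ))
      * α₂ ^ ((τ.2 : ℕ) * (p'.2 : ℕ)) * polyEval f (α₁ ^ (p'.1 : ℕ)) (α₂ ^ (p'.2 : ℕ)))
    h p
  have he0 : algebraMap F L (e p) ≠ 0 :=
    fun h' => hep ((map_eq_zero_iff _ (algebraMap F L).injective).mp h')
  have hα₁0 : α₁ ≠ 0 := hα₁.ne_zero hr₁.ne'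
  have hα₂0 : α₂ ≠ 0 := hα₂.ne_zero hr₂.ne'
  simp only [mul_eq_zero, he0, pow_eq_zero_iff', hα₁0, hα₂0, false_and, or_false,
    false_or] at hc
  exact hc

end AuxProofs

/-- the defining set of the projection of Λ(U) to L(r₁,r₂)
equals the support of e. -/
theorem defining_set_of_lambda_eq_support
    (q : ℕ) (hq : IsPrimePow q)
    (F : Type) [Field F] [Fintype F] (hF : Fintype.card F = q)
    (L : Type) [Field L] [Algebra F L]
    (r₁ r₂ : ℕ) (hr₁ : 0 < r₁) (hr₂ : 0 < r₂) (hco : Nat.Coprime q (r₁ * r₂))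
    (α₁ α₂ : L) (hα₁ : IsPrimitiveRoot α₁ r₁) (hα₂ : IsPrimitiveRoot α₂ r₂)
    (T : MonOrd) (e : Fin r₁ × Fin r₂ → F) (τ : Fin r₁ × Fin r₂)
    (U : ℕ × ℕ → L) (hU : U = synTable α₁ α₂ τ e) :
    {p : Fin r₁ × Fin r₂ |
        ∀ g ∈ Ideal.Quotient.mk (periodIdeal L r₁ r₂) ''
            {f : AddMonoidAlgebra L (ℕ × ℕ) | GeneratesU T U f.coeff ∨ f = 0},
          ∀ h : AddMonoidAlgebra L (ℕ × ℕ), Ideal.Quotient.mk (periodIdeal L r₁ r₂) h = g →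
            polyEval h.coeff (α₁ ^ (p.1 : ℕ)) (α₂ ^ (p.2 : ℕ)) = 0} =
      {p : Fin r₁ × Fin r₂ | e p ≠ 0} := by
  classical
  subst hU
  ext p
  simp only [Set.mem_setOf_eq]
  constructor
  · intro hp
    by_contra hep
    set S : Finset (Fin r₁ × Fin r₂) := Finset.univ.filter (fun m => e m ≠ 0) with hS
    set g : Fin r₁ × Fin r₂ → AddMonoidAlgebra L (ℕ × ℕ) := fun m =>
      if α₁ ^ (m.1 : ℕ) = α₁ ^ (p.1 : ℕ) then
        AddMonoidAlgebra.single (0, 1) 1 - AddMonoidAlgebra.single (0, 0) (α₂ ^ (m.2 : ℕ))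
      else
        AddMonoidAlgebra.single (1, 0) 1 - AddMonoidAlgebra.single (0, 0) (α₁ ^ (m.1 : ℕ))
      with hg
    set f : AddMonoidAlgebra L (ℕ × ℕ) := ∏ m ∈ S, g m with hf
    have evalg : ∀ m k : Fin r₁ × Fin r₂,
        evalHom L (α₁ ^ (k.1 : ℕ)) (α₂ ^ (k.2 : ℕ)) (g m)
          = if α₁ ^ (m.1 : ℕ) = α₁ ^ (p.1 : ℕ) then α₂ ^ (k.2 : ℕ) - α₂ ^ (m.2 : ℕ)
            else α₁ ^ (k.1 : ℕ) - α₁ ^ (m.1 : ℕ) := by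
      intro m k
      by_cases hm : α₁ ^ (m.1 : ℕ) = α₁ ^ (p.1 : ℕ) <;>
        simp [hg, hm, map_sub, evalHom_single]
    have hfp : evalHom L (α₁ ^ (p.1 : ℕ)) (α₂ ^ (p.2 : ℕ)) f ≠ 0 := by
      rw [hf, map_prod, Finset.prod_ne_zero_iff]
      intro m hm
      have hem : e m ≠ 0 := (Finset.mem_filter.mp hm).2
      have hmp : m ≠ p := fun h => hem (h ▸ hep)
      rw [evalg]
      by_cases hm1 : α₁ ^ (m.1 : ℕ) = α₁ ^ (p.1 : ℕ)
      · rw [if_pos hm1]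
        have h1 : m.1 = p.1 := Fin.val_injective (hα₁.pow_inj m.1.isLt p.1.isLt hm1)
        have h2 : m.2 ≠ p.2 := fun h2 => hmp (Prod.ext h1 h2)
        refine sub_ne_zero.mpr fun h => ?_
        exact h2 (Fin.val_injective (hα₂.pow_inj m.2.isLt p.2.isLt h.symm))
      · rw [if_neg hm1]
        exact sub_ne_zero.mpr fun h => hm1 h.symm
    have hf0 : f ≠ 0 := fun h => hfp (by rw [h, map_zero])
    have hgen : GeneratesU T (synTable α₁ α₂ τ e) f.coeff := by
      refine generates_of_vanish α₁ α₂ τ e T (fun h0 => hf0 (AddMonoidAlgebra.coeff_eq_zero.mp h0)) fun m hem => ?_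
      rw [← evalHom_eq_polyEval, hf, map_prod]
      refine Finset.prod_eq_zero (Finset.mem_filter.mpr ⟨Finset.mem_univ m, hem⟩) ?_
      rw [evalg]
      by_cases hm1 : α₁ ^ (m.1 : ℕ) = α₁ ^ (p.1 : ℕ) <;> simp [hm1]
    have hzero := hp (Ideal.Quotient.mk (periodIdeal L r₁ r₂) f)
      ⟨f, Or.inl hgen, rfl⟩ f rfl
    rw [← evalHom_eq_polyEval] at hzero
    exact hfp hzero
  · intro hep gq hgq h hh
    obtain ⟨f, hfΛ, rfl⟩ := hgq
    have hker : h - f ∈ periodIdeal L r₁ r₂ := by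
      rwa [Ideal.Quotient.eq] at hh
    have hx : (α₁ ^ (p.1 : ℕ)) ^ r₁ = 1 := by
      rw [← pow_mul, mul_comm, pow_mul, hα₁.pow_eq_one, one_pow]
    have hy : (α₂ ^ (p.2 : ℕ)) ^ r₂ = 1 := by
      rw [← pow_mul, mul_comm, pow_mul, hα₂.pow_eq_one, one_pow]
    have h1 : evalHom L (α₁ ^ (p.1 : ℕ)) (α₂ ^ (p.2 : ℕ)) (h - f) = 0 :=
      evalHom_eq_zero_of_mem hx hy hker
    rw [map_sub, sub_eq_zero] at h1
    rw [← evalHom_eq_polyEval, h1, evalHom_eq_polyEval]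
    rcases hfΛ with hfΛ | rfl
    · exact vanish_of_generates hr₁ hr₂ hα₁ hα₂ τ e T hfΛ p hep
    · simp [polyEval]
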